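/- Let F be a self-similar set with feasible open set O satisfying OSC, and let G := O ∖ ⋃ᵢ closure(Sᵢ O) be the tiling generator. Define the relative inradius g̃ := sup{dist(x, F) : x ∈ G}. Then g̃ = sup{dist(x, F) : x ∈ O}. -/

import Mathlib

open MeasureTheory Metric

/-- the relative inradius of the tiling generator
G := O ∖ ⋃ᵢ cl(Sᵢ O) with respect to F equals the supremal distance to F over all of
O: sup{dist(x,F) : x ∈ G} = sup{dist(x,F) : x ∈ O}. -/
theorem relative_inradius_generator {n N : ℕ} (hN : 0 < N)
    (S : Fin N → EuclideanSpace ℝ (Fin n) → EuclideanSpace ℝ (Fin n))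
    (r : Fin N → ℝ) (hr : ∀ i, r i ∈ Set.Ioo (0 : ℝ) 1)
    (hsim : ∀ i x y, dist (S i x) (S i y) = r i * dist x y)
    (F : Set (EuclideanSpace ℝ (Fin n))) (hFcomp : IsCompact F) (hFne : F.Nonempty)
    (hFinv : F = ⋃ i, S i '' F) (hdimH : dimH F < n)
    (O : Set (EuclideanSpace ℝ (Fin n))) (hOopen : IsOpen O) (hOne : O.Nonempty)
    (hObdd : Bornology.IsBounded O)
    (hOSC₁ : (⋃ i, S i '' O) ⊆ O)
    (hOSC₂ : ∀ i j, i ≠ j → Disjoint (S i '' O) (S j '' O)) :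
    sSup ((fun x => infDist x F) '' (O \ ⋃ i, closure (S i '' O))) =
      sSup ((fun x => infDist x F) '' O) := by

  haveI : Nonempty (Fin N) := ⟨⟨0, hN⟩⟩
  obtain ⟨i₀, hi₀⟩ := Finite.exists_max r
  obtain ⟨x₀, hx₀⟩ := hOne
  obtain ⟨R, hR⟩ := hObdd.subset_closedBall x₀
  set f : EuclideanSpace ℝ (Fin n) → ℝ := fun x => infDist x F with hf
  have hbddO : BddAbove (f '' O) := by
    refine ⟨infDist x₀ F + R, ?_⟩
    rintro _ ⟨x, hx, rfl⟩
    calc f x ≤ infDist x₀ F + dist x x₀ := infDist_le_infDist_add_dist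
      _ ≤ infDist x₀ F + R := by
          have := mem_closedBall.mp (hR hx)
          linarith
  set G := O \ ⋃ i, closure (S i '' O) with hG
  have hGsub : G ⊆ O := Set.diff_subset
  have hbddG : BddAbove (f '' G) := hbddO.mono (Set.image_mono hGsub)
  set M := sSup (f '' O) with hM
  have hMge : ∀ x ∈ O, f x ≤ M := fun x hx => le_csSup hbddO ⟨x, hx, rfl⟩
  have hM0 : (0:ℝ) ≤ M := le_trans infDist_nonneg (hMge x₀ hx₀)
  have hSF : ∀ i, S i '' F ⊆ F := fun i =>
    (Set.subset_iUnion (fun i => S i '' F) i).trans hFinv.ge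
  set ρ := r i₀ with hρ
  have hρ1 : ρ < 1 := (hr i₀).2
  have hkey : ∀ i, ∀ x ∈ closure (S i '' O), f x ≤ ρ * M := by
    intro i x hx
    have hclosed : IsClosed {y | f y ≤ ρ * M} :=
      isClosed_le (continuous_infDist_pt F) continuous_const
    refine hclosed.closure_subset_iff.mpr ?_ hx
    rintro _ ⟨z, hz, rfl⟩
    obtain ⟨w, hwF, hw⟩ := hFcomp.exists_infDist_eq_dist hFne z
    have h1 : f (S i z) ≤ infDist (S i z) (S i '' F) :=
      infDist_le_infDist_of_subset (hSF i) (hFne.image _)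
    have h2 : infDist (S i z) (S i '' F) ≤ dist (S i z) (S i w) :=
      infDist_le_dist_of_mem ⟨w, hwF, rfl⟩
    have h3 : dist (S i z) (S i w) = r i * dist z w := hsim i z w
    have h4 : r i * dist z w ≤ ρ * M := by
      have hfz : f z ≤ M := hMge z hz
      have : dist z w ≤ M := hw ▸ hfz
      exact mul_le_mul (hi₀ i) this dist_nonneg (le_of_lt (hr i₀).1)
    show f (S i z) ≤ ρ * M
    linarith [h1, h2.trans_eq h3]
  have hGle : sSup (f '' G) ≤ M := by
    rcases (f '' G).eq_empty_or_nonempty with h | h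
    · rw [h, Real.sSup_empty]; exact hM0
    · exact csSup_le_csSup hbddO h (Set.image_mono hGsub)
  have hG0 : (0:ℝ) ≤ sSup (f '' G) := by
    rcases (f '' G).eq_empty_or_nonempty with h | h
    · rw [h, Real.sSup_empty]
    · obtain ⟨_, ⟨y, hy, rfl⟩⟩ := h
      exact le_trans infDist_nonneg (le_csSup hbddG ⟨y, hy, rfl⟩)
  have hmax : ∀ x ∈ O, f x ≤ max (sSup (f '' G)) (ρ * M) := by
    intro x hx
    by_cases hxc : x ∈ ⋃ i, closure (S i '' O)
    · obtain ⟨_, ⟨i, rfl⟩, hxi⟩ := hxc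
      exact le_max_of_le_right (hkey i x hxi)
    · exact le_max_of_le_left (le_csSup hbddG ⟨x, ⟨hx, hxc⟩, rfl⟩)
  have hMle : M ≤ max (sSup (f '' G)) (ρ * M) :=
    csSup_le ⟨f x₀, ⟨x₀, hx₀, rfl⟩⟩ (by rintro _ ⟨x, hx, rfl⟩; exact hmax x hx)
  rcases le_max_iff.mp hMle with h | h
  · exact le_antisymm hGle h
  · have hM0' : M ≤ 0 := by nlinarith
    have : M = 0 := le_antisymm hM0' hM0
    rw [this]
    exact le_antisymm (hGle.trans hM0') hG0
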